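/- Let k ≥ 1 and let f : ℝ^n → ℝ be in W^{k,∞}. Then for 0 ≤ l ≤ k, ‖∇^l f‖_{L^∞} ≤ C ‖f‖_{L^∞}^{1 − l/k} ‖f‖_{W^{k,∞}}^{l/k}, where C depends only on n, k, l. -/

import Mathlib

open Real Finset

/-- Optimization in `t` of `2A/t + Bt`. -/
lemma LK_opt_bound {A B x : ℝ} (hA : 0 ≤ A) (hB : 0 ≤ B)
    (h : ∀ t : ℝ, 0 < t → x ≤ 2 * A / t + B * t) :
    x ≤ 3 * Real.sqrt (A * B) := by
  rcases eq_or_lt_of_le hA with hA0 | hA0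
  · have hx : x ≤ 0 := by
      refine le_of_forall_pos_le_add (fun ε hε => ?_)
      have := h (ε / (B + 1)) (by positivity)
      rw [← hA0] at this
      have h2 : B * (ε / (B + 1)) ≤ ε := by
        rw [mul_div_assoc']
        rw [div_le_iff₀ (by linarith)]
        nlinarith
      have h3 : 2 * (0:ℝ) / (ε / (B + 1)) = 0 := by simp
      rw [h3] at this
      linarith
    exact hx.trans (by positivity)
  rcases eq_or_lt_of_le hB with hB0 | hB0
  · have hx : x ≤ 0 := by
      refine le_of_forall_pos_le_add (fun ε hε => ?_)
      have ht : (0:ℝ) < 2 * A / ε := by positivity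
      have := h (2 * A / ε) ht
      rw [← hB0] at this
      have h2 : 2 * A / (2 * A / ε) = ε := by field_simp
      simpa [h2] using this
    exact hx.trans (by positivity)
  · have hsA : 0 < Real.sqrt A := Real.sqrt_pos.2 hA0
    have hsB : 0 < Real.sqrt B := Real.sqrt_pos.2 hB0
    have := h (Real.sqrt A / Real.sqrt B) (by positivity)
    rw [Real.sqrt_mul hA]
    have e1 : 2 * A / (Real.sqrt A / Real.sqrt B) = 2 * Real.sqrt A * Real.sqrt B := by
      rw [div_div_eq_mul_div, div_eq_iff (ne_of_gt hsA)]
      nlinarith [Real.mul_self_sqrt (le_of_lt hA0)]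
    have e2 : B * (Real.sqrt A / Real.sqrt B) = Real.sqrt A * Real.sqrt B := by
      rw [mul_div_assoc', div_eq_iff (ne_of_gt hsB)]
      nlinarith [Real.mul_self_sqrt (le_of_lt hB0)]
    rw [e1, e2] at this
    linarith

/-- Vector-valued two-point Landau estimate. -/
lemma LK_key_step {E F : Type*} [NormedAddCommGroup E] [NormedSpace ℝ E]
    [NormedAddCommGroup F] [NormedSpace ℝ F]
    {u : E → F} (hu : ContDiff ℝ 2 u) {A B : ℝ}
    (hA : ∀ y, ‖u y‖ ≤ A) (hB : ∀ y, ‖fderiv ℝ (fderiv ℝ u) y‖ ≤ B)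
    {t : ℝ} (ht : 0 < t) (x : E) :
    ‖fderiv ℝ u x‖ ≤ 2 * A / t + B * t := by
  have hA0 : 0 ≤ A := le_trans (norm_nonneg _) (hA x)
  have hB0 : 0 ≤ B := le_trans (norm_nonneg (fderiv ℝ (fderiv ℝ u) x)) (hB x)
  have hdu : Differentiable ℝ u := hu.differentiable (by norm_num)
  have hdu1 : Differentiable ℝ (fderiv ℝ u) :=
    (hu.fderiv_right (m := 1) (by norm_num)).differentiable (by norm_num)
  refine ContinuousLinearMap.opNorm_le_bound _ (by positivity) (fun v => ?_)
  rcases eq_or_ne v 0 with rfl | hv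
  · simp
  have hvn : (0:ℝ) < ‖v‖ := norm_pos_iff.2 hv
  set s : ℝ := t / ‖v‖ with hs
  have hs0 : 0 < s := by positivity
  set y : E := x + s • v with hy
  have hyx : ‖y - x‖ = t := by
    rw [hy]
    simp only [add_sub_cancel_left, norm_smul, Real.norm_eq_abs, abs_of_pos hs0]
    rw [hs]; field_simp
  -- Lipschitz bound on fderiv u
  have hlip : ∀ w, ‖fderiv ℝ u w - fderiv ℝ u x‖ ≤ B * ‖w - x‖ := by
    intro w
    exact convex_univ.norm_image_sub_le_of_norm_fderiv_le (f := fderiv ℝ u)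
      (fun z _ => (hdu1 z)) (fun z _ => hB z) (Set.mem_univ x) (Set.mem_univ w)
  have hmem_x : x ∈ Metric.closedBall x t := Metric.mem_closedBall_self ht.le
  have hmem_y : y ∈ Metric.closedBall x t := by
    rw [Metric.mem_closedBall, dist_eq_norm, hyx]
  have htaylor : ‖u y - u x - (fderiv ℝ u x) (y - x)‖ ≤ (B * t) * ‖y - x‖ := by
    refine (convex_closedBall x t).norm_image_sub_le_of_norm_fderiv_le'
      (fun z _ => hdu z) (fun z hz => ?_) hmem_x hmem_y
    have := hlip z
    have hzx : ‖z - x‖ ≤ t := by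
      rw [Metric.mem_closedBall, dist_eq_norm] at hz; exact hz
    exact this.trans (by nlinarith)
  rw [hyx] at htaylor
  have hfy : (fderiv ℝ u x) (y - x) = s • (fderiv ℝ u x v) := by
    rw [hy]; simp [map_smul]
  rw [hfy] at htaylor
  have h1 : ‖s • (fderiv ℝ u x v)‖ ≤ 2 * A + B * t * t := by
    have := norm_sub_norm_le (u y - u x) (s • (fderiv ℝ u x) v)
    have h2 : ‖u y - u x‖ ≤ 2 * A := by
      calc ‖u y - u x‖ ≤ ‖u y‖ + ‖u x‖ := norm_sub_le _ _
      _ ≤ 2 * A := by linarith [hA y, hA x]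
    have h4 : s • (fderiv ℝ u x) v = (u y - u x) - (u y - u x - s • (fderiv ℝ u x) v) := by
      abel
    have h5 : ‖s • (fderiv ℝ u x) v‖
        ≤ ‖u y - u x‖ + ‖u y - u x - s • (fderiv ℝ u x) v‖ := by
      conv_lhs => rw [h4]
      exact norm_sub_le _ _
    linarith
  rw [norm_smul, Real.norm_eq_abs, abs_of_pos hs0] at h1
  have h3 : s * ‖v‖ = t := by rw [hs]; field_simp
  rw [div_add' _ _ _ (ne_of_gt ht), ← sub_nonneg]
  have expand : (2 * A + B * t * t) / t * ‖v‖ - ‖(fderiv ℝ u x) v‖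
      = ((2 * A + B * t * t) - s * ‖(fderiv ℝ u x) v‖) * (‖v‖ / t) := by
    rw [hs]; field_simp
    try ring
  rw [expand]
  have : 0 ≤ (2 * A + B * t * t) - s * ‖(fderiv ℝ u x) v‖ := by linarith
  positivity

/-- Norm of the second derivative of the `j`-th iterated derivative. -/
lemma LK_norm_fderiv2 {E F : Type*} [NormedAddCommGroup E] [NormedSpace ℝ E]
    [NormedAddCommGroup F] [NormedSpace ℝ F] (f : E → F) (j : ℕ) (y : E) :
    @norm (E →L[ℝ] E →L[ℝ] E [×j]→L[ℝ] F) (ContinuousLinearMap.hasOpNorm (𝕜 := ℝ) (𝕜₂ := ℝ) (σ₁₂ := RingHom.id ℝ) (E := E) (F := E →L[ℝ] E [×j]→L[ℝ] F)) (fderiv ℝ (fderiv ℝ (iteratedFDeriv ℝ j f)) y) = ‖iteratedFDeriv ℝ (j+2) f y‖ := by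
  have h1 : fderiv ℝ (iteratedFDeriv ℝ j f)
      = (continuousMultilinearCurryLeftEquiv ℝ (fun _ : Fin (j+1) => E) F) ∘
        iteratedFDeriv ℝ (j+1) f := fderiv_iteratedFDeriv
  rw [h1]
  have h2 := LinearIsometryEquiv.comp_fderiv (𝕜 := ℝ) (G := E) (E := E [×(j+1)]→L[ℝ] F) (F := E →L[ℝ] E [×j]→L[ℝ] F) (continuousMultilinearCurryLeftEquiv ℝ (fun _ : Fin (j+1) => E) F) (f := iteratedFDeriv ℝ (j+1) f) (x := y)
  have h4 := norm_fderiv_iteratedFDeriv (𝕜 := ℝ) (f := f) (n := j+1) (x := y)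
  rw [h2]
  refine (ContinuousLinearMap.opNorm_ext _ (fderiv ℝ (iteratedFDeriv ℝ (j+1) f) y) fun v => ?_).trans h4
  exact (continuousMultilinearCurryLeftEquiv ℝ (fun _ : Fin (j+1) => E) F).norm_map _

/-- Discrete convexity: midpoint-convex sequences lie below chords. -/
lemma LK_discrete_convex (k l : ℕ) (hl : l ≤ k) (c : ℕ → ℝ)
    (hc : ∀ j, j + 2 ≤ k → 2 * c (j+1) ≤ c j + c (j+2)) :
    (k : ℝ) * c l ≤ ((k : ℝ) - l) * c 0 + l * c k := by
  set d : ℕ → ℝ := fun j => c (j+1) - c j with hd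
  have hmono : ∀ i j, i ≤ j → j + 1 ≤ k → d i ≤ d j := by
    intro i j hij
    induction j with
    | zero =>
      intro _
      obtain rfl : i = 0 := Nat.le_zero.mp hij
      exact le_rfl
    | succ m ih =>
      intro hjk
      rcases Nat.eq_or_lt_of_le hij with rfl | hlt
      · exact le_rfl
      · have h1 : d i ≤ d m := ih (by omega) (by omega)
        have h2 : d m ≤ d (m+1) := by
          have := hc m (by omega)
          simp only [hd]
          linarith
        linarith
  have tele : ∀ m, c m - c 0 = ∑ j ∈ Finset.range m, d j := by
    intro m
    rw [Finset.sum_range_sub (fun j => c j)]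
  have key : (k:ℝ) * (∑ j ∈ Finset.range l, d j) ≤ l * (∑ j ∈ Finset.range k, d j) := by
    rcases Nat.eq_zero_or_pos l with rfl | hl0
    · simp
    rcases eq_or_lt_of_le hl with rfl | hlk
    · rfl
    -- 0 < l < k
    have hsplit : ∑ j ∈ Finset.range k, d j
        = (∑ j ∈ Finset.range l, d j) + ∑ j ∈ Finset.Ico l k, d j := by
      rw [Finset.range_eq_Ico, Finset.range_eq_Ico]
      exact (Finset.sum_Ico_consecutive d (Nat.zero_le l) hl).symm
    have h1 : ∑ j ∈ Finset.range l, d j ≤ l * d (l-1) := by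
      have := Finset.sum_le_card_nsmul (Finset.range l) d (d (l-1))
        (fun j hj => hmono j (l-1) (by simp at hj; omega) (by omega))
      simpa [Finset.card_range, nsmul_eq_mul] using this
    have h2 : ((k - l : ℕ) : ℝ) * d (l-1) ≤ ∑ j ∈ Finset.Ico l k, d j := by
      have := Finset.card_nsmul_le_sum (Finset.Ico l k) d (d (l-1))
        (fun j hj => by
          simp only [Finset.mem_Ico] at hj
          exact hmono (l-1) j (by omega) (by omega))
      simpa [Nat.card_Ico, nsmul_eq_mul] using this
    have hkl : ((k - l : ℕ) : ℝ) = (k:ℝ) - l := by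
      push_cast [Nat.cast_sub hl]; ring
    rw [hkl] at h2
    have hklpos : (0:ℝ) ≤ (k:ℝ) - l := by
      have : (l:ℝ) ≤ k := by exact_mod_cast hl
      linarith
    have hlpos : (0:ℝ) ≤ (l:ℝ) := by positivity
    have step : ((k:ℝ) - l) * (∑ j ∈ Finset.range l, d j) ≤ l * ∑ j ∈ Finset.Ico l k, d j := by
      calc ((k:ℝ) - l) * (∑ j ∈ Finset.range l, d j)
          ≤ ((k:ℝ) - l) * (l * d (l-1)) := by
            exact mul_le_mul_of_nonneg_left h1 hklpos
        _ = (l:ℝ) * (((k:ℝ) - l) * d (l-1)) := by ring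
        _ ≤ l * ∑ j ∈ Finset.Ico l k, d j := by
            exact mul_le_mul_of_nonneg_left h2 hlpos
    rw [hsplit]
    nlinarith [step]
  have tl := tele l
  have tk := tele k
  have hlk : (l:ℝ) ≤ (k:ℝ) := by exact_mod_cast hl
  nlinarith [key]

/-- Interpolation along a chain of square-root inequalities. -/
lemma LK_chain_interp (k l : ℕ) (hk : 1 ≤ k) (hl : l ≤ k) (a : ℕ → ℝ)
    (ha0 : ∀ j, j ≤ k → 0 ≤ a j)
    (hch : ∀ j, j + 2 ≤ k → a (j+1) ≤ 3 * Real.sqrt (a j * a (j+2)))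
    {A R : ℝ} (hA : a 0 ≤ A) (hR : ∀ j, j ≤ k → a j ≤ R) :
    a l ≤ 3 ^ (l * (k - l)) * A ^ (1 - (l:ℝ)/(k:ℝ)) * R ^ ((l:ℝ)/(k:ℝ)) := by
  have hkpos : (0:ℝ) < k := by exact_mod_cast hk
  have hA0 : 0 ≤ A := (ha0 0 (by omega)).trans hA
  have hR0 : 0 ≤ R := (ha0 0 (by omega)).trans (hR 0 (by omega))
  rcases Nat.eq_zero_or_pos l with rfl | hl0
  · simp only [Nat.cast_zero, zero_div, sub_zero, Real.rpow_one, Real.rpow_zero,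
      Nat.zero_mul, pow_zero, one_mul, mul_one]
    exact hA
  rcases eq_or_lt_of_le hl with rfl | hlk
  · have h1 : (l:ℝ)/(l:ℝ) = 1 := div_self (by positivity)
    rw [h1]
    simp only [sub_self, Real.rpow_zero, Real.rpow_one, Nat.sub_self, Nat.mul_zero,
      pow_zero, one_mul, mul_one]
    exact hR l le_rfl
  by_cases hz : ∀ j, j ≤ k → 0 < a j
  · -- all positive: convexity of the logarithm
    set c : ℕ → ℝ := fun j => Real.log (a j) - Real.log 3 * ((j:ℝ) * ((k:ℝ) - (j:ℝ)))
      with hcdef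
    have hc : ∀ j, j + 2 ≤ k → 2 * c (j+1) ≤ c j + c (j+2) := by
      intro j hj
      have pj := hz j (by omega)
      have pj1 := hz (j+1) (by omega)
      have pj2 := hz (j+2) (by omega)
      have hlog : 2 * Real.log (a (j+1))
          ≤ 2 * Real.log 3 + Real.log (a j) + Real.log (a (j+2)) := by
        have h1 : Real.log (a (j+1)) ≤ Real.log (3 * Real.sqrt (a j * a (j+2))) :=
          Real.log_le_log pj1 (hch j hj)
        rw [Real.log_mul (by norm_num) (by positivity),
          Real.log_sqrt (by positivity),
          Real.log_mul (ne_of_gt pj) (ne_of_gt pj2)] at h1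
        linarith
      have hid : 2 * c (j+1) - (c j + c (j+2))
          = 2 * Real.log (a (j+1)) - Real.log (a j) - Real.log (a (j+2))
            - 2 * Real.log 3 := by
        simp only [hcdef]
        push_cast
        ring
      linarith
    have hcx := LK_discrete_convex k l hl c hc
    have hc0 : c 0 = Real.log (a 0) := by simp [hcdef]
    have hck : c k = Real.log (a k) := by simp [hcdef]
    have hcl : c l = Real.log (a l) - Real.log 3 * ((l:ℝ) * ((k:ℝ) - (l:ℝ))) := rfl
    rw [hc0, hck, hcl] at hcx
    -- divide by k
    have hlog2 : Real.log (a l) ≤ (((k:ℝ) - l) / k) * Real.log (a 0)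
        + ((l:ℝ)/k) * Real.log (a k) + Real.log 3 * ((l:ℝ) * ((k:ℝ) - (l:ℝ))) := by
      have e : (k:ℝ) * ((((k:ℝ) - l) / k) * Real.log (a 0)
          + ((l:ℝ)/k) * Real.log (a k) + Real.log 3 * ((l:ℝ) * ((k:ℝ) - (l:ℝ))))
          = ((k:ℝ) - l) * Real.log (a 0) + (l:ℝ) * Real.log (a k)
            + (k:ℝ) * (Real.log 3 * ((l:ℝ) * ((k:ℝ) - (l:ℝ)))) := by
        field_simp
      have h2 : (k:ℝ) * Real.log (a l) ≤ (k:ℝ) * ((((k:ℝ) - l) / k) * Real.log (a 0)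
          + ((l:ℝ)/k) * Real.log (a k) + Real.log 3 * ((l:ℝ) * ((k:ℝ) - (l:ℝ)))) := by
        rw [e]
        nlinarith [hcx]
      exact le_of_mul_le_mul_left h2 hkpos
    -- exponentiate
    have hexp := Real.exp_le_exp.mpr hlog2
    rw [Real.exp_log (hz l (by omega))] at hexp
    have e0 : Real.exp ((((k:ℝ) - l) / k) * Real.log (a 0)
        + ((l:ℝ)/k) * Real.log (a k) + Real.log 3 * ((l:ℝ) * ((k:ℝ) - (l:ℝ))))
        = (a 0) ^ (((k:ℝ) - l) / k) * (a k) ^ ((l:ℝ)/k)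
          * 3 ^ ((l:ℝ) * ((k:ℝ) - (l:ℝ))) := by
      rw [Real.exp_add, Real.exp_add]
      rw [Real.rpow_def_of_pos (hz 0 (by omega)), Real.rpow_def_of_pos (hz k le_rfl),
        Real.rpow_def_of_pos (by norm_num : (0:ℝ) < 3)]
      ring_nf
    rw [e0] at hexp
    have e3 : (3:ℝ) ^ ((l:ℝ) * ((k:ℝ) - (l:ℝ))) = 3 ^ (l * (k - l)) := by
      rw [← Real.rpow_natCast 3 (l * (k-l))]
      congr 1
      push_cast [Nat.cast_sub hl]
      ring
    rw [e3] at hexp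
    have ekl : ((k:ℝ) - l) / k = 1 - (l:ℝ)/k := by field_simp
    rw [ekl] at hexp
    have hθ0 : 0 ≤ (l:ℝ)/k := by positivity
    have hθ1 : (l:ℝ)/k ≤ 1 := by
      rw [div_le_one hkpos]; exact_mod_cast hl
    have m1 : (a 0) ^ (1 - (l:ℝ)/k) ≤ A ^ (1 - (l:ℝ)/k) :=
      Real.rpow_le_rpow (ha0 0 (by omega)) hA (by linarith)
    have m2 : (a k) ^ ((l:ℝ)/k) ≤ R ^ ((l:ℝ)/k) :=
      Real.rpow_le_rpow (ha0 k le_rfl) (hR k le_rfl) hθ0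
    calc a l ≤ (a 0) ^ (1 - (l:ℝ)/k) * (a k) ^ ((l:ℝ)/k) * 3 ^ (l * (k - l)) := hexp
      _ ≤ A ^ (1 - (l:ℝ)/k) * R ^ ((l:ℝ)/k) * 3 ^ (l * (k - l)) := by
          have hp1 : (0:ℝ) ≤ (a 0) ^ (1 - (l:ℝ)/k) := Real.rpow_nonneg (ha0 0 (by omega)) _
          have hp2 : (0:ℝ) ≤ (a k) ^ ((l:ℝ)/k) := Real.rpow_nonneg (ha0 k le_rfl) _
          have hp3 : (0:ℝ) ≤ A ^ (1 - (l:ℝ)/k) := Real.rpow_nonneg hA0 _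
          have hp4 : (0:ℝ) < (3:ℝ) ^ (l * (k - l)) := by positivity
          nlinarith [mul_le_mul m1 m2 hp2 hp3]
      _ = 3 ^ (l * (k - l)) * A ^ (1 - (l:ℝ)/k) * R ^ ((l:ℝ)/k) := by ring
  · -- some a j vanishes; then a l = 0
    push_neg at hz
    obtain ⟨j, hjk, hj0'⟩ := hz
    have hj0 : a j = 0 := le_antisymm hj0' (ha0 j hjk)
    have halz : a l = 0 := by
      rcases le_or_gt j l with hjl | hlj
      · -- propagate upwards
        have up : ∀ m, j ≤ m → m < k → a m = 0 := by
          intro m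
          induction m with
          | zero =>
            intro hjm _
            obtain rfl : j = 0 := Nat.le_zero.mp hjm
            exact hj0
          | succ i ih =>
            intro hjm hmk
            rcases Nat.eq_or_lt_of_le hjm with rfl | hlt
            · exact hj0
            · have hai : a i = 0 := ih (by omega) (by omega)
              have hc1 := hch i (by omega)
              rw [hai, zero_mul, Real.sqrt_zero, mul_zero] at hc1
              exact le_antisymm hc1 (ha0 _ (by omega))
        exact up l hjl hlk
      · -- propagate downwards with strong induction
        have down : ∀ m, m ≤ k → l ≤ m → a m = 0 → a l = 0 := by
          intro m
          induction m using Nat.strong_induction_on with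
          | _ m ih =>
            intro hmk hlm h0
            rcases eq_or_lt_of_le hlm with rfl | hlt
            · exact h0
            · obtain ⟨i, rfl⟩ : ∃ i, m = i + 2 := ⟨m - 2, by omega⟩
              have hc1 := hch i (by omega)
              rw [h0, mul_zero, Real.sqrt_zero, mul_zero] at hc1
              have h1 : a (i+1) = 0 := le_antisymm hc1 (ha0 _ (by omega))
              exact ih (i+1) (by omega) (by omega) (by omega) h1
        exact down j hjk hlj.le hj0
    rw [halz]
    positivity

/-- Gagliardo–Nirenberg type interpolation in `L^∞`-based Sobolev spaces:
for `f ∈ W^{k,∞}` and `0 ≤ l ≤ k`,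
`‖∇^l f‖_∞ ≤ C ‖f‖_∞^{1−l/k} ‖f‖_{W^{k,∞}}^{l/k}`, with `C = C(n,k,l)`. -/
theorem Linfty_interpolation (n k l : ℕ) (hk : 1 ≤ k) (hl : l ≤ k) :
    ∃ C : ℝ, 0 < C ∧
      ∀ (f : EuclideanSpace ℝ (Fin n) → ℝ) (M0 Mk : ℝ), ContDiff ℝ k f →
        (∀ x, ‖f x‖ ≤ M0) →
        (∀ i ≤ k, ∀ x, ‖iteratedFDeriv ℝ i f x‖ ≤ Mk) →
        0 ≤ M0 → 0 ≤ Mk →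
        ∀ x, ‖iteratedFDeriv ℝ l f x‖ ≤
          C * M0 ^ (1 - (l : ℝ) / k) * Mk ^ ((l : ℝ) / k) := by
  refine ⟨3 ^ (l * (k - l)), by positivity, ?_⟩
  intro f M0 Mk hf h0 hk' hM0 hMk x
  have hkpos : (0:ℝ) < k := by exact_mod_cast hk
  haveI : Nonempty (EuclideanSpace ℝ (Fin n)) := ⟨0⟩
  set a : ℕ → ℝ := fun j => ⨆ y, ‖iteratedFDeriv ℝ j f y‖ with ha
  have hbdd : ∀ j, j ≤ k →
      BddAbove (Set.range fun y => ‖iteratedFDeriv ℝ j f y‖) := by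
    intro j hj
    exact ⟨Mk, by rintro _ ⟨y, rfl⟩; exact hk' j hj y⟩
  have hle : ∀ j, j ≤ k → ∀ y, ‖iteratedFDeriv ℝ j f y‖ ≤ a j :=
    fun j hj y => le_ciSup (hbdd j hj) y
  have hRa : ∀ j, j ≤ k → a j ≤ Mk := fun j hj => ciSup_le (fun y => hk' j hj y)
  have ha0 : ∀ j, j ≤ k → 0 ≤ a j :=
    fun j hj => le_trans (norm_nonneg _) (hle j hj 0)
  have hAa : a 0 ≤ min M0 Mk := by
    refine ciSup_le (fun y => ?_)
    rw [norm_iteratedFDeriv_zero]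
    refine le_min (h0 y) ?_
    have := hk' 0 (by omega) y
    rwa [norm_iteratedFDeriv_zero] at this
  have hch : ∀ j, j + 2 ≤ k → a (j+1) ≤ 3 * Real.sqrt (a j * a (j+2)) := by
    intro j hj
    apply LK_opt_bound (ha0 j (by omega)) (ha0 (j+2) (by omega))
    intro t ht
    refine ciSup_le (fun y => ?_)
    have hu : ContDiff ℝ 2 (iteratedFDeriv ℝ j f) := by
      apply hf.iteratedFDeriv_right (m := 2)
      have : ((2 + j : ℕ) : WithTop ℕ∞) ≤ ((k : ℕ) : WithTop ℕ∞) := by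
        exact_mod_cast Nat.cast_le.mpr (by omega : 2 + j ≤ k)
      push_cast at this
      exact_mod_cast this
    have hkey := LK_key_step hu (fun z => hle j (by omega) z)
      (fun z => by rw [LK_norm_fderiv2]; exact hle (j+2) (by omega) z) ht y
    rwa [norm_fderiv_iteratedFDeriv] at hkey
  have main := LK_chain_interp k l hk hl a ha0 hch hAa hRa
  refine le_trans (hle l hl x) (le_trans main ?_)
  have hθ0 : 0 ≤ (l:ℝ)/k := by positivity
  have hθ1 : (l:ℝ)/k ≤ 1 := by rw [div_le_one hkpos]; exact_mod_cast hl
  have m1 : (min M0 Mk) ^ (1 - (l:ℝ)/k) ≤ M0 ^ (1 - (l:ℝ)/k) :=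
    Real.rpow_le_rpow (le_min hM0 hMk) (min_le_left _ _) (by linarith)
  have hp2 : (0:ℝ) ≤ Mk ^ ((l:ℝ)/k) := Real.rpow_nonneg hMk _
  have hp4 : (0:ℝ) < (3:ℝ) ^ (l * (k - l)) := by positivity
  have := mul_le_mul_of_nonneg_right m1 hp2
  nlinarith [this]
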